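/- arXiv:1012.4245 — 3 statements merged into one kernel-verified Lean document; each statement's English description precedes it below -/
import Mathlib

section
/- For every q > 0, every integer n ≥ 1 and every x ∈ [0,1]: R_{n,q}(1,x) = 1, R_{n,q}(t,x) = x, and R_{n,q}(t²,x) = x·v(q,x) + x(1 − v(q,x))/[n]_q, where t^m denotes the monomial function t ↦ t^m on [0,1]. -/
open Finset Filter

noncomputable section

/-- The q-integer `[n]_q = 1 + q + ⋯ + q^(n-1)`. -/
def qInt (q : ℝ) (n : ℕ) : ℝ := ∑ i ∈ Finset.range n, q ^ i

/-- The q-factorial `[n]_q!`. -/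
def qFact (q : ℝ) : ℕ → ℝ
  | 0 => 1
  | n + 1 => qFact q n * qInt q (n + 1)

/-- The q-binomial coefficient `[n k]_q`. -/
def qBinom (q : ℝ) (n k : ℕ) : ℝ := qFact q n / (qFact q k * qFact q (n - k))

/-- The Lupaş basis function `b_{nk}(q;x)`. -/
def lupasB (q : ℝ) (n k : ℕ) (x : ℝ) : ℝ :=
  qBinom q n k * q ^ (k * (k - 1) / 2) * x ^ k * (1 - x) ^ (n - k) /
    ∏ j ∈ Finset.range (n - 1), (1 - x + q ^ (j + 1) * x)

/-- The limit Lupaş basis function `b_{∞k}(q;x)` (for `0 < q < 1`, `x ∈ [0,1)`). -/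
def lupasBInf (q : ℝ) (k : ℕ) (x : ℝ) : ℝ :=
  q ^ (k * (k - 1) / 2) * (x / (1 - x)) ^ k /
    ((1 - q) ^ k * qFact q k * ∏' j : ℕ, (1 + q ^ j * (x / (1 - x))))

/-- The Lupaş q-analogue of the Bernstein operator `R_{n,q}(f,x)`. -/
def lupasR (q : ℝ) (n : ℕ) (f : ℝ → ℝ) (x : ℝ) : ℝ :=
  ∑ k ∈ Finset.range (n + 1), f (qInt q k / qInt q n) * lupasB q n k x

/-- The limit q-Lupaş operator `R_{∞,q}(f,x)` for `0 < q < 1`. -/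
def lupasRInfLow (q : ℝ) (f : ℝ → ℝ) (x : ℝ) : ℝ :=
  if x = 1 then f 1 else ∑' k : ℕ, f (1 - q ^ k) * lupasBInf q k x

/-- The limit q-Lupaş operator `R_{∞,q}(f,x)`: for `q > 1` it is defined by
reflection, `R_{∞,q}(f,x) = R_{∞,1/q}(g,1-x)` with `g(x) = f(1-x)`. -/
def lupasRInf (q : ℝ) (f : ℝ → ℝ) (x : ℝ) : ℝ :=
  if 1 < q then lupasRInfLow (1 / q) (fun t => f (1 - t)) (1 - x)
  else lupasRInfLow q f x

/-- The transform `v(q,x) = qx/(1-x+qx)`. -/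
def vq (q x : ℝ) : ℝ := q * x / (1 - x + q * x)

/-- `L_{n,q}(f,x) = R_{n,q}(f,x) - R_{∞,q}(f,x)`. -/
def lupasL (q : ℝ) (n : ℕ) (f : ℝ → ℝ) (x : ℝ) : ℝ :=
  lupasR q n f x - lupasRInf q f x

/-- The modulus of continuity `ω(f,t)` of `f` on `[0,1]`. -/
def omega1 (f : ℝ → ℝ) (t : ℝ) : ℝ :=
  sSup {d | ∃ x ∈ Set.Icc (0:ℝ) 1, ∃ y ∈ Set.Icc (0:ℝ) 1, |x - y| ≤ t ∧ d = |f x - f y|}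

/-- The second modulus of smoothness `ω₂(f,t)` of `f` on `[0,1]`. -/
def omega2 (f : ℝ → ℝ) (t : ℝ) : ℝ :=
  sSup {d | ∃ h, 0 ≤ h ∧ h ≤ t ∧ ∃ x, 0 ≤ x ∧ x ≤ 1 - 2 * h ∧
    d = |f (x + 2 * h) - 2 * f (x + h) + f x|}

section LupasAux

variable {q : ℝ}

lemma qInt_pos (hq : 0 < q) {n : ℕ} (hn : 1 ≤ n) : 0 < qInt q n := by
  unfold qInt
  exact Finset.sum_pos (fun i _ => pow_pos hq i) (Finset.nonempty_range_iff.mpr (by omega))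

lemma qFact_pos (hq : 0 < q) (n : ℕ) : 0 < qFact q n := by
  induction n with
  | zero => exact one_pos
  | succ m ih => exact mul_pos ih (qInt_pos hq (by omega))

lemma qInt_add (a b : ℕ) : qInt q (a + b) = qInt q a + q ^ a * qInt q b := by
  unfold qInt
  rw [Finset.sum_range_add, Finset.mul_sum]
  simp [pow_add]

lemma qInt_succ (k : ℕ) : qInt q (k + 1) = 1 + q * qInt q k := by
  have := qInt_add (q := q) 1 k
  simpa [qInt, add_comm] using this

lemma tri (k : ℕ) : (k + 1) * k / 2 = k * (k - 1) / 2 + k := by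
  have := Nat.triangle_succ k
  simpa using this

lemma qBinom_zero (hq : 0 < q) (n : ℕ) : qBinom q n 0 = 1 := by
  unfold qBinom
  simp only [Nat.sub_zero]
  rw [show qFact q 0 = 1 from rfl, one_mul, div_self (qFact_pos hq n).ne']

lemma qBinom_self (hq : 0 < q) (n : ℕ) : qBinom q n n = 1 := by
  unfold qBinom
  simp only [Nat.sub_self]
  rw [show qFact q 0 = 1 from rfl, mul_one, div_self (qFact_pos hq n).ne']

lemma qBinom_mul (hq : 0 < q) {m i : ℕ} (hi : i ≤ m) :
    qInt q (i + 1) * qBinom q (m + 1) (i + 1) = qInt q (m + 1) * qBinom q m i := by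
  unfold qBinom
  have e1 : m + 1 - (i + 1) = m - i := by omega
  rw [e1, show qFact q (m + 1) = qFact q m * qInt q (m + 1) from rfl,
    show qFact q (i + 1) = qFact q i * qInt q (i + 1) from rfl]
  have h1 := (qFact_pos hq m).ne'
  have h2 := (qFact_pos hq i).ne'
  have h3 := (qFact_pos hq (m - i)).ne'
  have h4 := (qInt_pos hq (Nat.succ_le_succ (Nat.zero_le i))).ne'
  field_simp

lemma qPascal (hq : 0 < q) {n i : ℕ} (hi : i < n) :
    qBinom q (n + 1) (i + 1) = qBinom q n (i + 1) + q ^ (n - i) * qBinom q n i := by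
  obtain ⟨m, rfl⟩ : ∃ m, n = i + 1 + m := ⟨n - i - 1, by omega⟩
  unfold qBinom
  have e1 : i + 1 + m + 1 - (i + 1) = m + 1 := by omega
  have e2 : i + 1 + m - (i + 1) = m := by omega
  have e3 : i + 1 + m - i = m + 1 := by omega
  rw [e1, e2, e3,
    show qFact q (i + 1 + m + 1) = qFact q (i + 1 + m) * qInt q (i + 1 + m + 1) from rfl,
    show qFact q (m + 1) = qFact q m * qInt q (m + 1) from rfl,
    show qFact q (i + 1) = qFact q i * qInt q (i + 1) from rfl]
  have h1 := (qFact_pos hq (i + 1 + m)).ne'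
  have h2 := (qFact_pos hq i).ne'
  have h3 := (qFact_pos hq m).ne'
  have h4 := (qInt_pos hq (Nat.succ_le_succ (Nat.zero_le i))).ne'
  have h5 := (qInt_pos hq (Nat.succ_le_succ (Nat.zero_le m))).ne'
  have key : qInt q (i + 1 + m + 1) = qInt q (m + 1) + q ^ (m + 1) * qInt q (i + 1) := by
    rw [show i + 1 + m + 1 = m + 1 + (i + 1) by ring, qInt_add]
  field_simp
  rw [key]
  ring

lemma qGauss (hq : 0 < q) : ∀ (n : ℕ) (a b : ℝ),
    ∑ k ∈ Finset.range (n + 1),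
      qBinom q n k * q ^ (k * (k - 1) / 2) * a ^ k * b ^ (n - k)
      = ∏ j ∈ Finset.range n, (b + q ^ j * a) := by
  intro n
  induction n with
  | zero => intro a b; simp [qBinom, qFact]
  | succ n ih =>
    intro a b
    rw [Finset.prod_range_succ, ← ih a b, mul_add, Finset.sum_mul, Finset.sum_mul,
      Finset.sum_range_succ, Finset.sum_range_succ', Finset.sum_range_succ',
      Finset.sum_range_succ]
    have hF0 : qBinom q (n + 1) 0 * q ^ (0 * (0 - 1) / 2) * a ^ 0 * b ^ (n + 1 - 0)
        = qBinom q n 0 * q ^ (0 * (0 - 1) / 2) * a ^ 0 * b ^ (n - 0) * b := by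
      simp [qBinom_zero hq, pow_succ]
    have hFn : qBinom q (n + 1) (n + 1) * q ^ ((n + 1) * (n + 1 - 1) / 2) * a ^ (n + 1) *
          b ^ (n + 1 - (n + 1))
        = qBinom q n n * q ^ (n * (n - 1) / 2) * a ^ n * b ^ (n - n) * (q ^ n * a) := by
      simp only [Nat.sub_self, pow_zero, mul_one, Nat.add_sub_cancel, tri, pow_add,
        qBinom_self hq, pow_succ]
      ring
    have hmid : ∀ i ∈ Finset.range n,
        qBinom q (n + 1) (i + 1) * q ^ ((i + 1) * (i + 1 - 1) / 2) * a ^ (i + 1) *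
          b ^ (n + 1 - (i + 1))
        = qBinom q n (i + 1) * q ^ ((i + 1) * (i + 1 - 1) / 2) * a ^ (i + 1) *
            b ^ (n - (i + 1)) * b
          + qBinom q n i * q ^ (i * (i - 1) / 2) * a ^ i * b ^ (n - i) * (q ^ n * a) := by
      intro i hi
      have hi' := Finset.mem_range.mp hi
      rw [qPascal hq hi']
      have e1 : n + 1 - (i + 1) = n - i := by omega
      have hb : b ^ (n - (i + 1)) * b = b ^ (n - i) := by
        rw [← pow_succ]; congr 1; omega
      have hqe : q ^ (n - i) * q ^ ((i + 1) * (i + 1 - 1) / 2)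
          = q ^ (i * (i - 1) / 2) * q ^ n := by
        rw [← pow_add, ← pow_add]; congr 1
        have := tri i
        simp only [Nat.add_sub_cancel] at this ⊢
        omega
      rw [e1]
      linear_combination (qBinom q n i * a ^ (i + 1) * b ^ (n - i)) * hqe -
        (qBinom q n (i + 1) * q ^ ((i + 1) * (i + 1 - 1) / 2) * a ^ (i + 1)) * hb
    rw [Finset.sum_congr rfl hmid, Finset.sum_add_distrib, hF0, hFn]
    ring

end LupasAux

theorem lupasR_moments (q : ℝ) (hq : 0 < q) (n : ℕ) (hn : 1 ≤ n)
    (x : ℝ) (hx : x ∈ Set.Icc (0:ℝ) 1) :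
    lupasR q n (fun _ => 1) x = 1 ∧
    lupasR q n (fun t => t) x = x ∧
    lupasR q n (fun t => t ^ 2) x = x * vq q x + x * (1 - vq q x) / qInt q n := by
  obtain ⟨hx0, hx1⟩ := hx
  obtain ⟨m, rfl⟩ : ∃ m, n = m + 1 := ⟨n - 1, by omega⟩
  have hc : ∀ j : ℕ, 0 < 1 - x + q ^ (j + 1) * x := by
    intro j
    rcases eq_or_lt_of_le hx1 with h | h
    · rw [h]; simpa using pow_pos hq (j + 1)
    · have := mul_nonneg (pow_pos hq (j + 1)).le hx0
      linarith
  have hDpos : 0 < ∏ j ∈ Finset.range m, (1 - x + q ^ (j + 1) * x) :=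
    Finset.prod_pos fun j _ => hc j
  have hNpos : 0 < qInt q (m + 1) := qInt_pos hq (by omega)
  have hR : ∀ f : ℝ → ℝ, lupasR q (m + 1) f x
      = (∑ k ∈ Finset.range (m + 1 + 1), f (qInt q k / qInt q (m + 1)) *
          (qBinom q (m + 1) k * q ^ (k * (k - 1) / 2) * x ^ k * (1 - x) ^ (m + 1 - k))) /
        ∏ j ∈ Finset.range m, (1 - x + q ^ (j + 1) * x) := by
    intro f
    simp only [lupasR, lupasB, Nat.add_sub_cancel]
    rw [Finset.sum_div]
    exact Finset.sum_congr rfl fun k _ => (mul_div_assoc _ _ _).symm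
  -- moment 0
  have h0 : lupasR q (m + 1) (fun _ => 1) x = 1 := by
    rw [hR]
    simp only [one_mul]
    rw [qGauss hq (m + 1) x (1 - x), Finset.prod_range_succ']
    have h1x : 1 - x + q ^ 0 * x = 1 := by rw [pow_zero]; ring
    rw [h1x, mul_one, div_self hDpos.ne']
  -- key first-moment sum
  have hL1 : ∑ k ∈ Finset.range (m + 1 + 1), qInt q k *
        (qBinom q (m + 1) k * q ^ (k * (k - 1) / 2) * x ^ k * (1 - x) ^ (m + 1 - k))
      = qInt q (m + 1) * x * ∏ j ∈ Finset.range m, (1 - x + q ^ (j + 1) * x) := by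
    rw [Finset.sum_range_succ']
    have h00 : qInt q 0 = 0 := by simp [qInt]
    simp only [h00, zero_mul, add_zero]
    have step : ∀ i ∈ Finset.range (m + 1), qInt q (i + 1) *
          (qBinom q (m + 1) (i + 1) * q ^ ((i + 1) * (i + 1 - 1) / 2) * x ^ (i + 1) *
            (1 - x) ^ (m + 1 - (i + 1)))
        = (qInt q (m + 1) * x) *
            (qBinom q m i * q ^ (i * (i - 1) / 2) * (q * x) ^ i * (1 - x) ^ (m - i)) := by
      intro i hi
      have hi' : i ≤ m := by have := Finset.mem_range.mp hi; omega
      have e1 : m + 1 - (i + 1) = m - i := by omega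
      have hmulv := qBinom_mul hq hi'
      have hqe : q ^ ((i + 1) * (i + 1 - 1) / 2) = q ^ (i * (i - 1) / 2) * q ^ i := by
        rw [← pow_add]; congr 1
        have := tri i
        simp only [Nat.add_sub_cancel] at this ⊢
        omega
      rw [e1, hqe, mul_pow]
      linear_combination (q ^ (i * (i - 1) / 2) * q ^ i * x ^ (i + 1) * (1 - x) ^ (m - i)) *
        hmulv
    rw [Finset.sum_congr rfl step, ← Finset.mul_sum, qGauss hq m (q * x) (1 - x)]
    congr 1
    refine Finset.prod_congr rfl fun j _ => ?_
    rw [← mul_assoc, ← pow_succ]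
  -- moment 1
  have h1 : lupasR q (m + 1) (fun t => t) x = x := by
    rw [hR]
    simp only [div_mul_eq_mul_div]
    rw [← Finset.sum_div, hL1, mul_assoc, mul_div_cancel_left₀ _ hNpos.ne',
      mul_div_assoc, div_self hDpos.ne', mul_one]
  refine ⟨h0, h1, ?_⟩
  -- moment 2
  have hsq : ∀ k : ℕ, (qInt q k) ^ 2 = qInt q k + q * (qInt q k * qInt q (k - 1)) := by
    intro k
    cases k with
    | zero => simp [qInt]
    | succ j =>
      rw [show j + 1 - 1 = j from rfl, qInt_succ]
      ring
  rcases m with _ | p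
  · -- n = 1
    have hq1 : qInt q (0 + 1) = 1 := by simp [qInt]
    rw [hR, hq1]
    norm_num [Finset.sum_range_succ, qInt, qBinom, qFact]
    unfold vq
    ring
  · -- n = p + 2
    have hPpos : 0 < ∏ j ∈ Finset.range p, (1 - x + q ^ (j + 1 + 1) * x) :=
      Finset.prod_pos fun j _ => hc (j + 1)
    have hL2 : ∑ k ∈ Finset.range (p + 1 + 1 + 1), qInt q k * qInt q (k - 1) *
          (qBinom q (p + 1 + 1) k * q ^ (k * (k - 1) / 2) * x ^ k *
            (1 - x) ^ (p + 1 + 1 - k))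
        = qInt q (p + 1 + 1) * qInt q (p + 1) * (q * x ^ 2) *
            ∏ j ∈ Finset.range p, (1 - x + q ^ (j + 1 + 1) * x) := by
      rw [Finset.sum_range_succ', Finset.sum_range_succ']
      have h00 : qInt q 0 = 0 := by simp [qInt]
      simp only [h00, Nat.add_sub_cancel, Nat.zero_sub, zero_mul, mul_zero, add_zero]
      have step : ∀ j ∈ Finset.range (p + 1), qInt q (j + 1 + 1) * qInt q (j + 1) *
            (qBinom q (p + 1 + 1) (j + 1 + 1) * q ^ ((j + 1 + 1) * (j + 1) / 2) *
              x ^ (j + 1 + 1) * (1 - x) ^ (p + 1 + 1 - (j + 1 + 1)))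
          = (qInt q (p + 1 + 1) * qInt q (p + 1) * (q * x ^ 2)) *
              (qBinom q p j * q ^ (j * (j - 1) / 2) * (q ^ 2 * x) ^ j *
                (1 - x) ^ (p - j)) := by
        intro j hj
        have hj' : j ≤ p := by have := Finset.mem_range.mp hj; omega
        have hA := qBinom_mul hq (show j + 1 ≤ p + 1 by omega)
        have hB := qBinom_mul hq hj'
        have e1 : p + 1 + 1 - (j + 1 + 1) = p - j := by omega
        have hqe : q ^ ((j + 1 + 1) * (j + 1) / 2)
            = q ^ (j * (j - 1) / 2) * q ^ (2 * j + 1) := by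
          rw [← pow_add]; congr 1
          have t1 := tri (j + 1)
          have t2 := tri j
          simp only [Nat.add_sub_cancel] at t1 t2 ⊢
          omega
        rw [e1, hqe, mul_pow, ← pow_mul]
        linear_combination
          (qInt q (j + 1) * (q ^ (j * (j - 1) / 2) * q ^ (2 * j + 1)) * x ^ (j + 1 + 1) *
            (1 - x) ^ (p - j)) * hA
          + (qInt q (p + 1 + 1) * (q ^ (j * (j - 1) / 2) * q ^ (2 * j + 1)) *
            x ^ (j + 1 + 1) * (1 - x) ^ (p - j)) * hB
      rw [Finset.sum_congr rfl step, ← Finset.mul_sum, qGauss hq p (q ^ 2 * x) (1 - x)]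
      congr 1
      refine Finset.prod_congr rfl fun j _ => ?_
      congr 1
      rw [← mul_assoc, ← pow_add]
    rw [hR]
    simp only [div_pow, div_mul_eq_mul_div]
    rw [← Finset.sum_div]
    have hsum : ∑ k ∈ Finset.range (p + 1 + 1 + 1), qInt q k ^ 2 *
          (qBinom q (p + 1 + 1) k * q ^ (k * (k - 1) / 2) * x ^ k *
            (1 - x) ^ (p + 1 + 1 - k))
        = qInt q (p + 1 + 1) * x * ∏ j ∈ Finset.range (p + 1), (1 - x + q ^ (j + 1) * x)
          + q * (qInt q (p + 1 + 1) * qInt q (p + 1) * (q * x ^ 2) *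
            ∏ j ∈ Finset.range p, (1 - x + q ^ (j + 1 + 1) * x)) := by
      rw [← hL1, ← hL2, Finset.mul_sum, ← Finset.sum_add_distrib]
      refine Finset.sum_congr rfl fun k _ => ?_
      rw [hsq k]
      ring
    rw [hsum]
    have hD2 : (∏ j ∈ Finset.range (p + 1), (1 - x + q ^ (j + 1) * x))
        = (∏ j ∈ Finset.range p, (1 - x + q ^ (j + 1 + 1) * x)) *
          (1 - x + q ^ (0 + 1) * x) := Finset.prod_range_succ' _ _
    have hc0 : 0 < 1 - x + q * x := by simpa using hc 0
    have hN1 : qInt q (p + 1 + 1) = 1 + q * qInt q (p + 1) := qInt_succ (p + 1)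
    rw [hD2]
    unfold vq
    rw [show q ^ (0 + 1) = q by norm_num]
    have hPne := hPpos.ne'
    have hcne := hc0.ne'
    have hN' : 1 + q * qInt q (p + 1) ≠ 0 := hN1 ▸ hNpos.ne'
    rw [hN1]
    generalize (∏ j ∈ Finset.range p, (1 - x + q ^ (j + 1 + 1) * x)) = P at hPne ⊢
    generalize qInt q (p + 1) = N at hN' ⊢
    field_simp
    ring
end
end

section
/- For every q with 0 < q < 1 and every x ∈ [0,1]: R_{∞,q}(1,x) = 1, R_{∞,q}(t,x) = x, and R_{∞,q}(t²,x) = x·v(q,x) + (1−q)·x(1 − v(q,x)) = x − q·x(1 − v(q,x)), where t^m denotes the monomial function t ↦ t^m on [0,1]. -/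
open Finset Filter

noncomputable section

namespace LupasAux

def poch (q : ℝ) (k : ℕ) : ℝ := ∏ i ∈ Finset.range k, (1 - q ^ (i + 1))

def aE (q t : ℝ) (k : ℕ) : ℝ := q ^ (k * (k - 1) / 2) * t ^ k / poch q k

def E (q t : ℝ) : ℝ := ∑' k, aE q t k

lemma tri (k : ℕ) : (k + 1) * ((k + 1) - 1) / 2 = k * (k - 1) / 2 + k := by
  rcases k with _ | n
  · simp
  · simp only [Nat.add_sub_cancel]
    have h : (n + 1 + 1) * (n + 1) = (n + 1) * n + 2 * (n + 1) := by ring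
    rw [h, Nat.add_mul_div_left _ _ (by norm_num : 0 < 2)]

variable {q t : ℝ}

lemma poch_pos (hq0 : 0 < q) (hq1 : q < 1) (k : ℕ) : 0 < poch q k := by
  apply Finset.prod_pos
  intro i _
  have : q ^ (i + 1) < 1 := pow_lt_one₀ hq0.le hq1 (Nat.succ_ne_zero i)
  linarith

lemma poch_succ (k : ℕ) : poch q (k + 1) = poch q k * (1 - q ^ (k + 1)) :=
  Finset.prod_range_succ _ _

lemma poch_le (hq0 : 0 < q) (hq1 : q < 1) (k : ℕ) : 1 - q ≤ 1 - q ^ (k + 1) := by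
  have : q ^ (k + 1) ≤ q := by
    calc q ^ (k + 1) ≤ q ^ 1 := pow_le_pow_of_le_one hq0.le hq1.le (by omega)
    _ = q := pow_one q
  linarith

lemma aE_nonneg (hq0 : 0 < q) (hq1 : q < 1) (ht : 0 ≤ t) (k : ℕ) : 0 ≤ aE q t k := by
  have := poch_pos hq0 hq1 k
  unfold aE
  positivity

lemma aE_zero : aE q t 0 = 1 := by simp [aE, poch]

lemma aE_succ (hq0 : 0 < q) (hq1 : q < 1) (k : ℕ) :
    aE q t (k + 1) = aE q t k * (q ^ k * t) / (1 - q ^ (k + 1)) := by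
  unfold aE
  rw [tri, poch_succ, pow_add]
  have h1 : poch q k ≠ 0 := (poch_pos hq0 hq1 k).ne'
  have h2 : (1 : ℝ) - q ^ (k + 1) ≠ 0 := by
    have := poch_le hq0 hq1 k; nlinarith
  field_simp
  ring


lemma summable_aE (hq0 : 0 < q) (hq1 : q < 1) (ht : 0 ≤ t) : Summable (aE q t) := by
  apply summable_of_ratio_norm_eventually_le (r := 1/2) (by norm_num)
  have hlim : Tendsto (fun k : ℕ => q ^ k * t) atTop (nhds 0) := by
    simpa using (tendsto_pow_atTop_nhds_zero_of_lt_one hq0.le hq1).mul_const t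
  have hev : ∀ᶠ k : ℕ in atTop, q ^ k * t ≤ (1 - q) / 2 := by
    have hpos : (0:ℝ) < (1 - q) / 2 := by linarith
    filter_upwards [hlim.eventually (eventually_le_nhds hpos)] with k hk using hk
  filter_upwards [hev] with k hk
  have h1 : (0:ℝ) < 1 - q ^ (k + 1) := by have := poch_le hq0 hq1 k; linarith
  have h2 : 0 ≤ aE q t k := aE_nonneg hq0 hq1 ht k
  have h3 : 0 ≤ q ^ k * t := by positivity
  rw [Real.norm_eq_abs, Real.norm_eq_abs, abs_of_nonneg h2,
    abs_of_nonneg (aE_nonneg hq0 hq1 ht (k+1)), aE_succ hq0 hq1]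
  rw [div_le_iff₀ h1]
  have hle : 1 - q ≤ 1 - q ^ (k + 1) := poch_le hq0 hq1 k
  nlinarith [mul_le_mul_of_nonneg_left hk h2]

lemma E_recur (hq0 : 0 < q) (hq1 : q < 1) (ht : 0 ≤ t) :
    E q t = (1 + t) * E q (q * t) := by
  have hqt : 0 ≤ q * t := by positivity
  have S1 : Summable (aE q (q * t)) := summable_aE hq0 hq1 hqt
  set h : ℕ → ℝ := fun k => Nat.rec 0 (fun k _ => t * aE q (q * t) k) k with hh
  have h0 : h 0 = 0 := rfl
  have hsucc : ∀ k, h (k + 1) = t * aE q (q * t) k := fun k => rfl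
  have Sh : Summable h := by
    rw [← summable_nat_add_iff 1]
    simpa [hsucc] using S1.mul_left t
  have hpt : ∀ k, aE q t k = aE q (q * t) k + h k := by
    intro k
    rcases k with _ | k
    · simp [h0, aE_zero]
    · rw [hsucc]
      unfold aE
      rw [tri, poch_succ, pow_add, mul_pow]
      have h1 : poch q k ≠ 0 := (poch_pos hq0 hq1 k).ne'
      have h2 : (1 : ℝ) - q ^ (k + 1) ≠ 0 := by
        have := poch_le hq0 hq1 k; nlinarith
      field_simp
      ring
  have : E q t = E q (q * t) + ∑' k, h k := by
    rw [E, tsum_congr hpt, Summable.tsum_add S1 Sh, E]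
  rw [this, Summable.tsum_eq_zero_add Sh, h0]
  have : ∑' k, h (k + 1) = t * E q (q * t) := by
    rw [E, ← tsum_mul_left]
  rw [this]
  ring

lemma E_iter (hq0 : 0 < q) (hq1 : q < 1) (ht : 0 ≤ t) (n : ℕ) :
    E q t = (∏ j ∈ Finset.range n, (1 + q ^ j * t)) * E q (q ^ n * t) := by
  induction n with
  | zero => simp
  | succ n ih =>
    rw [ih, Finset.prod_range_succ]
    have h : E q (q ^ n * t) = (1 + q ^ n * t) * E q (q ^ (n + 1) * t) := by
      have := E_recur hq0 hq1 (t := q ^ n * t) (by positivity)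
      rw [this]; ring_nf
    rw [h]; ring

lemma E_ge_one (hq0 : 0 < q) (hq1 : q < 1) (ht : 0 ≤ t) : 1 ≤ E q t := by
  have := Summable.le_tsum (summable_aE hq0 hq1 ht) 0
    (fun k _ => aE_nonneg hq0 hq1 ht k)
  rwa [aE_zero] at this


/-- tail coefficient -/
def cE (q t : ℝ) (k : ℕ) : ℝ := q ^ ((k + 1) * k / 2) * t ^ k / poch q (k + 1)

lemma cE_nonneg (hq0 : 0 < q) (hq1 : q < 1) (ht : 0 ≤ t) (k : ℕ) : 0 ≤ cE q t k := by
  have := poch_pos hq0 hq1 (k + 1); unfold cE; positivity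

lemma summable_cE (hq0 : 0 < q) (hq1 : q < 1) (ht : 0 ≤ t) : Summable (cE q t) := by
  apply Summable.of_nonneg_of_le (cE_nonneg hq0 hq1 ht)
    (f := fun k => (1 / (1 - q)) * aE q t k)
  · intro k
    show cE q t k ≤ 1 / (1 - q) * aE q t k
    unfold cE aE
    have htri : (k + 1) * k / 2 = k * (k - 1) / 2 + k := by
      have := tri k; simpa using this
    rw [htri, pow_add, poch_succ]
    have hpk : 0 < poch q k := poch_pos hq0 hq1 k
    have h1 : (0:ℝ) < 1 - q ^ (k + 1) := by have := poch_le hq0 hq1 k; linarith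
    have h1q : (0:ℝ) < 1 - q := by linarith
    have hle : 1 - q ≤ 1 - q ^ (k + 1) := poch_le hq0 hq1 k
    have hqk : q ^ k ≤ 1 := pow_le_one₀ hq0.le hq1.le
    have ha : (0:ℝ) ≤ q ^ (k * (k - 1) / 2) * t ^ k := by positivity
    calc q ^ (k * (k - 1) / 2) * q ^ k * t ^ k / (poch q k * (1 - q ^ (k + 1)))
        ≤ q ^ (k * (k - 1) / 2) * t ^ k / (poch q k * (1 - q)) := by
          apply div_le_div₀ ha ?_ (by positivity) ?_
          · nlinarith [mul_le_mul_of_nonneg_left hqk ha]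
          · exact mul_le_mul_of_nonneg_left hle hpk.le
      _ = 1 / (1 - q) * (q ^ (k * (k - 1) / 2) * t ^ k / poch q k) := by
          field_simp
  · exact (summable_aE hq0 hq1 ht).mul_left _

lemma E_sub_one_le (hq0 : 0 < q) (hq1 : q < 1) {s : ℝ} (hs : 0 ≤ s) (hst : s ≤ t) :
    E q s ≤ 1 + s * ∑' k, cE q t k := by
  have ht : 0 ≤ t := hs.trans hst
  have Ss : Summable (aE q s) := summable_aE hq0 hq1 hs
  rw [E, Summable.tsum_eq_zero_add Ss, aE_zero]
  gcongr 1 + ?_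
  have hsh : Summable (fun k => aE q s (k + 1)) := by
    rw [summable_nat_add_iff]; exact Ss
  rw [← tsum_mul_left]
  apply Summable.tsum_le_tsum _ hsh ((summable_cE hq0 hq1 ht).mul_left s)
  intro k
  unfold aE cE
  have htri : (k + 1) * ((k + 1) - 1) / 2 = (k + 1) * k / 2 := by simp
  rw [htri]
  have hp : 0 < poch q (k + 1) := poch_pos hq0 hq1 (k + 1)
  rw [← mul_div_assoc]
  apply div_le_div_of_nonneg_right _ hp.le
  have hsk : s ^ k ≤ t ^ k := pow_le_pow_left₀ hs hst k
  calc q ^ ((k+1)*k/2) * s ^ (k + 1) = s * q ^ ((k+1)*k/2) * s ^ k := by ring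
    _ ≤ s * q ^ ((k+1)*k/2) * t ^ k := by
        apply mul_le_mul_of_nonneg_left hsk (by positivity)
    _ = s * (q ^ ((k+1)*k/2) * t ^ k) := by ring

lemma E_tendsto (hq0 : 0 < q) (hq1 : q < 1) (ht : 0 ≤ t) :
    Tendsto (fun n : ℕ => E q (q ^ n * t)) atTop (nhds 1) := by
  have hC : Tendsto (fun n : ℕ => 1 + q ^ n * t * ∑' k, cE q t k) atTop (nhds 1) := by
    have : Tendsto (fun n : ℕ => q ^ n * t * ∑' k, cE q t k) atTop (nhds 0) := by
      simpa using ((tendsto_pow_atTop_nhds_zero_of_lt_one hq0.le hq1).mul_const t).mul_const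
        (∑' k, cE q t k)
    simpa using this.const_add 1
  apply tendsto_of_tendsto_of_tendsto_of_le_of_le tendsto_const_nhds hC
  · intro n
    exact E_ge_one hq0 hq1 (by positivity)
  · intro n
    apply E_sub_one_le hq0 hq1 (by positivity)
    have : q ^ n ≤ 1 := pow_le_one₀ hq0.le hq1.le
    nlinarith

lemma prod_le_E (hq0 : 0 < q) (hq1 : q < 1) (ht : 0 ≤ t) (n : ℕ) :
    ∏ j ∈ Finset.range n, (1 + q ^ j * t) ≤ E q t := by
  rw [E_iter hq0 hq1 ht n]
  have h1 : 1 ≤ E q (q ^ n * t) := E_ge_one hq0 hq1 (by positivity)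
  have h2 : 0 ≤ ∏ j ∈ Finset.range n, (1 + q ^ j * t) :=
    Finset.prod_nonneg fun j _ => by positivity
  nlinarith

lemma prod_mono_of_one_le {f : ℕ → ℝ} (hf : ∀ j, 1 ≤ f j) :
    Monotone (fun s : Finset ℕ => ∏ j ∈ s, f j) := by
  intro s t hst
  have h1 : (∏ j ∈ t \ s, f j) * ∏ j ∈ s, f j = ∏ j ∈ t, f j := Finset.prod_sdiff hst
  have h2 : (1:ℝ) ≤ ∏ j ∈ t \ s, f j := by
    have := Finset.prod_le_prod (f := fun _ : ℕ => (1:ℝ)) (g := f)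
      (fun j _ => zero_le_one) (fun j _ => hf j) (s := t \ s)
    simpa using this
  have h3 : (0:ℝ) ≤ ∏ j ∈ s, f j :=
    Finset.prod_nonneg fun j _ => le_trans zero_le_one (hf j)
  calc ∏ j ∈ s, f j = 1 * ∏ j ∈ s, f j := by ring
    _ ≤ (∏ j ∈ t \ s, f j) * ∏ j ∈ s, f j := mul_le_mul_of_nonneg_right h2 h3
    _ = ∏ j ∈ t, f j := h1

lemma hasProd_E (hq0 : 0 < q) (hq1 : q < 1) (ht : 0 ≤ t) :
    HasProd (fun j : ℕ => 1 + q ^ j * t) (E q t) := by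
  have hone : ∀ j : ℕ, (1:ℝ) ≤ 1 + q ^ j * t := fun j => by
    have : (0:ℝ) ≤ q ^ j * t := by positivity
    linarith
  have hmono := prod_mono_of_one_le hone
  apply tendsto_atTop_isLUB hmono
  constructor
  · rintro _ ⟨s, rfl⟩
    obtain ⟨n, hn⟩ := s.exists_nat_subset_range
    calc ∏ j ∈ s, (1 + q ^ j * t) ≤ ∏ j ∈ Finset.range n, (1 + q ^ j * t) :=
          hmono hn
      _ ≤ E q t := prod_le_E hq0 hq1 ht n
  · intro b hb
    have hub : ∀ n : ℕ, ∏ j ∈ Finset.range n, (1 + q ^ j * t) ≤ b := fun n =>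
      hb ⟨Finset.range n, rfl⟩
    have hEn : ∀ n : ℕ, (1:ℝ) ≤ E q (q ^ n * t) := fun n =>
      E_ge_one hq0 hq1 (by positivity)
    have hlim : Tendsto (fun n : ℕ => ∏ j ∈ Finset.range n, (1 + q ^ j * t)) atTop
        (nhds (E q t)) := by
      have heq : ∀ n : ℕ, ∏ j ∈ Finset.range n, (1 + q ^ j * t) = E q t / E q (q ^ n * t) := by
        intro n
        have h1 := hEn n
        rw [E_iter hq0 hq1 ht n]
        rw [mul_div_assoc, div_self (by linarith), mul_one]
      simp_rw [heq]
      have := (E_tendsto hq0 hq1 ht)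
      have h2 := (tendsto_const_nhds (x := E q t)).div this one_ne_zero
      rw [div_one] at h2
      exact h2
    exact le_of_tendsto hlim (Eventually.of_forall hub)

lemma tprod_eq_E (hq0 : 0 < q) (hq1 : q < 1) (ht : 0 ≤ t) :
    (∏' j : ℕ, (1 + q ^ j * t)) = E q t :=
  (hasProd_E hq0 hq1 ht).tprod_eq


lemma geom_qInt (q : ℝ) (n : ℕ) : (1 - q) * qInt q n = 1 - q ^ n := by
  unfold qInt
  linear_combination -geom_sum_mul q n

lemma pochFact (hq0 : 0 < q) (hq1 : q < 1) : ∀ k, (1 - q) ^ k * qFact q k = poch q k := by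
  intro k
  induction k with
  | zero => simp [qFact, poch]
  | succ k ih =>
    rw [poch_succ, ← ih, ← geom_qInt q (k + 1)]
    show (1 - q) ^ (k + 1) * (qFact q k * qInt q (k + 1)) = _
    ring

lemma aE_qmul (q t : ℝ) (k : ℕ) : aE q (q * t) k = q ^ k * aE q t k := by
  unfold aE
  rw [mul_pow]
  ring

end LupasAux

open LupasAux in
theorem lupasRInf_moments (q : ℝ) (hq0 : 0 < q) (hq1 : q < 1)
    (x : ℝ) (hx : x ∈ Set.Icc (0:ℝ) 1) :
    lupasRInf q (fun _ => 1) x = 1 ∧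
    lupasRInf q (fun t => t) x = x ∧
    lupasRInf q (fun t => t ^ 2) x = x * vq q x + (1 - q) * (x * (1 - vq q x)) ∧
    lupasRInf q (fun t => t ^ 2) x = x - q * (x * (1 - vq q x)) := by
  obtain ⟨hx0, hx1le⟩ := hx
  have hnot : ¬ (1:ℝ) < q := by linarith
  simp only [lupasRInf, if_neg hnot]
  by_cases hx1 : x = 1
  · subst hx1
    have hv : vq q 1 = 1 := by
      unfold vq
      norm_num [hq0.ne']
    simp [lupasRInfLow, hv]
  · have hxlt : x < 1 := lt_of_le_of_ne hx1le hx1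
    have h1x : (0:ℝ) < 1 - x := by linarith
    have ht : 0 ≤ x / (1 - x) := by positivity
    have hqt : 0 ≤ q * (x / (1 - x)) := by positivity
    have hqqt : 0 ≤ q * (q * (x / (1 - x))) := by positivity
    have S0 : Summable (aE q (x / (1 - x))) := summable_aE hq0 hq1 ht
    have S1 : Summable (aE q (q * (x / (1 - x)))) := summable_aE hq0 hq1 hqt
    have S2 : Summable (aE q (q * (q * (x / (1 - x))))) := summable_aE hq0 hq1 hqqt
    have hE0 : 1 ≤ E q (x / (1 - x)) := E_ge_one hq0 hq1 ht
    have hE1 : 1 ≤ E q (q * (x / (1 - x))) := E_ge_one hq0 hq1 hqt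
    have hE2 : 1 ≤ E q (q * (q * (x / (1 - x)))) := E_ge_one hq0 hq1 hqqt
    have hE0' : E q (x / (1 - x)) ≠ 0 := by linarith
    have hE1' : E q (q * (x / (1 - x))) ≠ 0 := by linarith
    have hE2' : E q (q * (q * (x / (1 - x)))) ≠ 0 := by linarith
    have Erec1 : E q (x / (1 - x)) = (1 + x / (1 - x)) * E q (q * (x / (1 - x))) :=
      E_recur hq0 hq1 ht
    have Erec2 : E q (q * (x / (1 - x)))
        = (1 + q * (x / (1 - x))) * E q (q * (q * (x / (1 - x)))) :=
      E_recur hq0 hq1 hqt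
    have hb : ∀ k, lupasBInf q k x = aE q (x / (1 - x)) k / E q (x / (1 - x)) := by
      intro k
      unfold lupasBInf
      rw [pochFact hq0 hq1 k, tprod_eq_E hq0 hq1 ht]
      unfold aE
      rw [div_div]
    have h1t : (0:ℝ) < 1 + x / (1 - x) := by positivity
    have h1qt : (0:ℝ) < 1 + q * (x / (1 - x)) := by positivity
    have hD : (0:ℝ) < 1 - x + q * x := by nlinarith
    have haq2 : ∀ k : ℕ, aE q (q * (q * (x / (1 - x)))) k
        = q ^ k * (q ^ k * aE q (x / (1 - x)) k) := by
      intro k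
      rw [aE_qmul q (q * (x / (1 - x))) k, aE_qmul q (x / (1 - x)) k]
    set A := E q (q * (q * (x / (1 - x)))) with hA
    set B := E q (q * (x / (1 - x))) with hB
    set C := E q (x / (1 - x)) with hC
    refine ⟨?_, ?_, ?_, ?_⟩
    · rw [lupasRInfLow, if_neg hx1]
      have hcong : ∀ k : ℕ, (fun _ : ℝ => (1:ℝ)) (1 - q ^ k) * lupasBInf q k x
          = aE q (x / (1 - x)) k / E q (x / (1 - x)) := by
        intro k; rw [hb k]; ring
      rw [tsum_congr hcong, tsum_div_const]
      exact div_self hE0'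
    · rw [lupasRInfLow, if_neg hx1]
      have hcong : ∀ k : ℕ, (fun t : ℝ => t) (1 - q ^ k) * lupasBInf q k x
          = (aE q (x / (1 - x)) k - aE q (q * (x / (1 - x))) k) / E q (x / (1 - x)) := by
        intro k
        rw [hb k, aE_qmul]
        ring
      rw [tsum_congr hcong, tsum_div_const, Summable.tsum_sub S0 S1]
      show (C - B) / C = x
      rw [Erec1]
      field_simp [h1x.ne', hE1']
      ring
    · rw [lupasRInfLow, if_neg hx1]
      have hcong : ∀ k : ℕ, (fun t : ℝ => t ^ 2) (1 - q ^ k) * lupasBInf q k x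
          = (aE q (x / (1 - x)) k - 2 * aE q (q * (x / (1 - x))) k
              + aE q (q * (q * (x / (1 - x)))) k) / E q (x / (1 - x)) := by
        intro k
        rw [hb k, haq2 k, aE_qmul q (x / (1 - x)) k]
        ring
      rw [tsum_congr hcong, tsum_div_const, Summable.tsum_add (S0.sub (S1.mul_left 2)) S2,
        Summable.tsum_sub S0 (S1.mul_left 2), tsum_mul_left]
      show (C - 2 * B + A) / C = x * vq q x + (1 - q) * (x * (1 - vq q x))
      rw [Erec1, Erec2]
      unfold vq
      field_simp [h1x.ne', hE2', hD.ne']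
      ring
    · rw [lupasRInfLow, if_neg hx1]
      have hcong : ∀ k : ℕ, (fun t : ℝ => t ^ 2) (1 - q ^ k) * lupasBInf q k x
          = (aE q (x / (1 - x)) k - 2 * aE q (q * (x / (1 - x))) k
              + aE q (q * (q * (x / (1 - x)))) k) / E q (x / (1 - x)) := by
        intro k
        rw [hb k, haq2 k, aE_qmul q (x / (1 - x)) k]
        ring
      rw [tsum_congr hcong, tsum_div_const, Summable.tsum_add (S0.sub (S1.mul_left 2)) S2,
        Summable.tsum_sub S0 (S1.mul_left 2), tsum_mul_left]
      show (C - 2 * B + A) / C = x - q * (x * (1 - vq q x))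
      rw [Erec1, Erec2]
      unfold vq
      field_simp [h1x.ne', hE2', hD.ne']
      ring
end
end

section
/- For every q with 0 < q < 1 and every x ∈ [0,1]: R_{∞,q}(t³,x) = x·v(q,x) + (1−q)²·x(1 − v(q,x)) − q²·x(1 − v(q,x)) v(q²,x), where t³ denotes the function t ↦ t³ on [0,1]. -/
open Finset Filter

noncomputable section

open Topology
namespace LupasAux

/-- `(q;q)_k = ∏ (1 - q^(i+1))`. -/
def qp (q : ℝ) (k : ℕ) : ℝ := ∏ i ∈ Finset.range k, (1 - q ^ (i + 1))

/-- Term of Euler's q-exponential series. -/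
def qa (q z : ℝ) (k : ℕ) : ℝ := q ^ (∑ i ∈ Finset.range k, i) * z ^ k / qp q k

/-- Euler's q-exponential function. -/
def qF (q z : ℝ) : ℝ := ∑' k, qa q z k

variable {q : ℝ}

lemma qp_pos (hq0 : 0 < q) (hq1 : q < 1) (k : ℕ) : 0 < qp q k := by
  refine Finset.prod_pos fun i _ => ?_
  have : q ^ (i + 1) < 1 := pow_lt_one₀ hq0.le hq1 (Nat.succ_ne_zero i)
  linarith

lemma qp_succ (q : ℝ) (k : ℕ) : qp q (k + 1) = qp q k * (1 - q ^ (k + 1)) :=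
  Finset.prod_range_succ _ _

lemma qa_zero (q z : ℝ) : qa q z 0 = 1 := by simp [qa, qp]

lemma qa_nonneg (hq0 : 0 < q) (hq1 : q < 1) {z : ℝ} (hz : 0 ≤ z) (k : ℕ) : 0 ≤ qa q z k := by
  have := qp_pos hq0 hq1 k
  unfold qa; positivity

lemma one_sub_pow_pos (hq0 : 0 < q) (hq1 : q < 1) (k : ℕ) : 0 < 1 - q ^ (k + 1) := by
  have : q ^ (k + 1) < 1 := pow_lt_one₀ hq0.le hq1 (Nat.succ_ne_zero k)
  linarith

lemma qa_ratio (hq0 : 0 < q) (hq1 : q < 1) (z : ℝ) (k : ℕ) :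
    qa q z (k + 1) = qa q z k * (q ^ k * z / (1 - q ^ (k + 1))) := by
  have hp := (qp_pos hq0 hq1 k).ne'
  have hp1 := (one_sub_pow_pos hq0 hq1 k).ne'
  unfold qa
  rw [Finset.sum_range_succ, qp_succ]
  field_simp
  ring

lemma qa_succ (hq0 : 0 < q) (hq1 : q < 1) (z : ℝ) (k : ℕ) :
    qa q z (k + 1) = qa q (q * z) (k + 1) + z * qa q (q * z) k := by
  have hp := (qp_pos hq0 hq1 k).ne'
  have hp1 := (one_sub_pow_pos hq0 hq1 k).ne'
  unfold qa
  rw [Finset.sum_range_succ, qp_succ]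
  field_simp
  ring

lemma qa_scale (q w z : ℝ) (k : ℕ) : qa q (w * z) k = w ^ k * qa q z k := by
  unfold qa; rw [mul_pow]; ring

lemma summable_qa (hq0 : 0 < q) (hq1 : q < 1) (z : ℝ) : Summable (qa q z) := by
  have h2 : Tendsto (fun n : ℕ => q ^ n * |z|) atTop (𝓝 0) := by
    simpa using (tendsto_pow_atTop_nhds_zero_of_lt_one hq0.le hq1).mul_const |z|
  have hev : ∀ᶠ n : ℕ in atTop, q ^ n * |z| < (1 - q) / 2 :=
    h2.eventually_lt_const (by linarith)
  refine summable_of_ratio_norm_eventually_le (r := 1 / 2) (by norm_num) ?_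
  filter_upwards [hev] with n hn
  rw [qa_ratio hq0 hq1 z n]
  rw [norm_mul]
  have hb : ‖q ^ n * z / (1 - q ^ (n + 1))‖ ≤ 1 / 2 := by
    rw [norm_div, norm_mul]
    have h1 : (0:ℝ) < 1 - q ^ (n + 1) := one_sub_pow_pos hq0 hq1 n
    rw [Real.norm_eq_abs, Real.norm_eq_abs, Real.norm_eq_abs,
      abs_of_pos (pow_pos hq0 n), abs_of_pos h1]
    rw [div_le_iff₀ h1]
    have hq' : 1 - q ≤ 1 - q ^ (n + 1) := by
      have : q ^ (n + 1) ≤ q := by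
        have h := pow_le_one₀ hq0.le hq1.le (n := n)
        calc q ^ (n + 1) = q ^ n * q := pow_succ q n
        _ ≤ 1 * q := by nlinarith
        _ = q := one_mul q
      linarith
    nlinarith [abs_nonneg z, pow_pos hq0 n]
  calc ‖qa q z n‖ * ‖q ^ n * z / (1 - q ^ (n + 1))‖ ≤ ‖qa q z n‖ * (1 / 2) :=
        mul_le_mul_of_nonneg_left hb (norm_nonneg _)
    _ = 1 / 2 * ‖qa q z n‖ := by ring

lemma qF_funceq (hq0 : 0 < q) (hq1 : q < 1) (z : ℝ) :
    qF q z = (1 + z) * qF q (q * z) := by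
  have hsz := summable_qa hq0 hq1 z
  have hsqz := summable_qa hq0 hq1 (q * z)
  have h1 : Summable (fun k => qa q (q * z) (k + 1)) := (summable_nat_add_iff 1).2 hsqz
  have h0 : qF q (q * z) = 1 + ∑' k, qa q (q * z) (k + 1) := by
    rw [qF, Summable.tsum_eq_zero_add hsqz, qa_zero]
  have key : qF q z = 1 + (∑' k, qa q (q * z) (k + 1) + z * qF q (q * z)) := by
    rw [qF, Summable.tsum_eq_zero_add hsz, qa_zero]
    congr 1
    calc (∑' k, qa q z (k + 1)) = ∑' k, (qa q (q * z) (k + 1) + z * qa q (q * z) k) :=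
          tsum_congr fun k => qa_succ hq0 hq1 z k
      _ = (∑' k, qa q (q * z) (k + 1)) + ∑' k, z * qa q (q * z) k :=
          Summable.tsum_add h1 (hsqz.mul_left z)
      _ = (∑' k, qa q (q * z) (k + 1)) + z * qF q (q * z) := by rw [tsum_mul_left]; rfl
  rw [key]
  have := h0
  linarith [h0]

lemma qF_prod (hq0 : 0 < q) (hq1 : q < 1) (z : ℝ) (n : ℕ) :
    qF q z = (∏ j ∈ Finset.range n, (1 + q ^ j * z)) * qF q (q ^ n * z) := by
  induction n with
  | zero => simp
  | succ n ih =>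
      rw [Finset.prod_range_succ, ih, qF_funceq hq0 hq1 (q ^ n * z),
        show q * (q ^ n * z) = q ^ (n + 1) * z by ring]
      ring

lemma one_le_qF (hq0 : 0 < q) (hq1 : q < 1) {z : ℝ} (hz : 0 ≤ z) : 1 ≤ qF q z := by
  have hs := summable_qa hq0 hq1 z
  have h := Summable.le_tsum hs 0 (fun j _ => qa_nonneg hq0 hq1 hz j)
  simpa [qa_zero, qF] using h

lemma qF_pos (hq0 : 0 < q) (hq1 : q < 1) {z : ℝ} (hz : 0 ≤ z) : 0 < qF q z :=
  lt_of_lt_of_le one_pos (one_le_qF hq0 hq1 hz)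

lemma qF_sub_one_abs (hq0 : 0 < q) (hq1 : q < 1) {w : ℝ} (hw : |w| ≤ 1) :
    |qF q w - 1| ≤ |w| * ∑' k, qa q 1 (k + 1) := by
  have hs := summable_qa hq0 hq1 w
  have hs1 : Summable (fun k => qa q 1 (k + 1)) :=
    (summable_nat_add_iff 1).2 (summable_qa hq0 hq1 1)
  have hsw : Summable (fun k => qa q w (k + 1)) := (summable_nat_add_iff 1).2 hs
  have hE : qF q w - 1 = ∑' k, qa q w (k + 1) := by
    rw [qF, Summable.tsum_eq_zero_add hs, qa_zero]; ring
  rw [hE]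
  have hbound : ∀ k : ℕ, |qa q w (k + 1)| ≤ |w| * qa q 1 (k + 1) := by
    intro k
    have hp := qp_pos hq0 hq1 (k + 1)
    have h1 : |qa q w (k + 1)| = q ^ (∑ i ∈ Finset.range (k+1), i) * |w| ^ (k + 1) / qp q (k + 1) := by
      rw [qa, abs_div, abs_mul, abs_pow, abs_pow, abs_of_pos hq0, abs_of_pos hp]
    rw [h1, qa]
    have h2 : |w| ^ (k + 1) ≤ |w| := by
      calc |w| ^ (k + 1) = |w| * |w| ^ k := by ring
        _ ≤ |w| * 1 := by
            have := pow_le_one₀ (abs_nonneg w) hw (n := k)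
            nlinarith [abs_nonneg w]
        _ = |w| := mul_one _
    calc q ^ (∑ i ∈ Finset.range (k+1), i) * |w| ^ (k + 1) / qp q (k + 1)
        ≤ q ^ (∑ i ∈ Finset.range (k+1), i) * |w| / qp q (k + 1) := by gcongr
      _ = |w| * (q ^ (∑ i ∈ Finset.range (k+1), i) * 1 ^ (k+1) / qp q (k+1)) := by ring
  calc |∑' k, qa q w (k + 1)| ≤ ∑' k, |qa q w (k + 1)| := by
        simpa using norm_tsum_le_tsum_norm (f := fun k => qa q w (k + 1)) (by simpa using hsw.abs)
    _ ≤ ∑' k, |w| * qa q 1 (k + 1) := Summable.tsum_le_tsum hbound hsw.abs (hs1.mul_left _)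
    _ = |w| * ∑' k, qa q 1 (k + 1) := tsum_mul_left

lemma tendsto_qF_pow (hq0 : 0 < q) (hq1 : q < 1) (z : ℝ) :
    Tendsto (fun n : ℕ => qF q (q ^ n * z)) atTop (𝓝 1) := by
  rw [tendsto_iff_dist_tendsto_zero]
  have h2 : Tendsto (fun n : ℕ => q ^ n * |z| * ∑' k, qa q 1 (k + 1)) atTop (𝓝 0) := by
    have := ((tendsto_pow_atTop_nhds_zero_of_lt_one hq0.le hq1).mul_const |z|).mul_const
      (∑' k, qa q 1 (k + 1))
    simpa using this
  have hev : ∀ᶠ n : ℕ in atTop, q ^ n * |z| ≤ 1 := by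
    have h3 : Tendsto (fun n : ℕ => q ^ n * |z|) atTop (𝓝 0) := by
      simpa using (tendsto_pow_atTop_nhds_zero_of_lt_one hq0.le hq1).mul_const |z|
    filter_upwards [h3.eventually_lt_const one_pos] with n hn using hn.le
  refine squeeze_zero' (Eventually.of_forall fun n => dist_nonneg) ?_ h2
  filter_upwards [hev] with n hn
  have habs : |q ^ n * z| ≤ 1 := by
    rw [abs_mul, abs_of_pos (pow_pos hq0 n)]; exact hn
  have := qF_sub_one_abs hq0 hq1 habs
  rw [Real.dist_eq]
  calc |qF q (q ^ n * z) - 1| ≤ |q ^ n * z| * ∑' k, qa q 1 (k + 1) := this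
    _ = q ^ n * |z| * ∑' k, qa q 1 (k + 1) := by
        rw [abs_mul, abs_of_pos (pow_pos hq0 n)]

lemma hasProd_qF (hq0 : 0 < q) (hq1 : q < 1) {z : ℝ} (hz : 0 ≤ z) :
    HasProd (fun j : ℕ => 1 + q ^ j * z) (qF q z) := by
  set f : ℕ → ℝ := fun j => 1 + q ^ j * z with hf
  have hf1 : ∀ j, 1 ≤ f j := fun j => by
    have : 0 ≤ q ^ j * z := mul_nonneg (pow_pos hq0 j).le hz
    simp only [hf]; linarith
  have hfpos : ∀ j, (0:ℝ) ≤ f j := fun j => le_trans zero_le_one (hf1 j)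
  have hmono : Monotone (fun s : Finset ℕ => ∏ j ∈ s, f j) := fun s t hst => by
    show ∏ j ∈ s, f j ≤ ∏ j ∈ t, f j
    rw [← Finset.prod_sdiff hst]
    have h1 : (1:ℝ) ≤ ∏ j ∈ t \ s, f j := by
      have := Finset.prod_le_prod (f := fun _ : ℕ => (1:ℝ)) (g := f)
        (s := t \ s) (fun i _ => zero_le_one) (fun i _ => hf1 i)
      simpa using this
    have h2 : (0:ℝ) ≤ ∏ j ∈ s, f j := Finset.prod_nonneg fun i _ => hfpos i
    nlinarith
  have htend : Tendsto (fun n : ℕ => ∏ j ∈ Finset.range n, f j) atTop (𝓝 (qF q z)) := by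
    have hpos : ∀ n : ℕ, 0 < qF q (q ^ n * z) := fun n =>
      qF_pos hq0 hq1 (mul_nonneg (pow_pos hq0 n).le hz)
    have heq : ∀ n : ℕ, ∏ j ∈ Finset.range n, f j = qF q z / qF q (q ^ n * z) := by
      intro n
      rw [eq_div_iff (hpos n).ne']
      exact (qF_prod hq0 hq1 z n).symm
    have : Tendsto (fun n : ℕ => qF q z / qF q (q ^ n * z)) atTop (𝓝 (qF q z / 1)) :=
      tendsto_const_nhds.div (tendsto_qF_pow hq0 hq1 z) one_ne_zero
    rw [div_one] at this
    simpa [heq] using this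
  have hmono' : Monotone (fun n : ℕ => ∏ j ∈ Finset.range n, f j) := fun a b hab =>
    hmono (Finset.range_subset_range.2 hab)
  have hlub : IsLUB (Set.range fun s : Finset ℕ => ∏ j ∈ s, f j) (qF q z) := by
    constructor
    · rintro _ ⟨s, rfl⟩
      obtain ⟨n, hn⟩ := s.exists_nat_subset_range
      calc ∏ j ∈ s, f j ≤ ∏ j ∈ Finset.range n, f j := hmono hn
        _ ≤ qF q z := hmono'.ge_of_tendsto htend n
    · intro u hu
      exact le_of_tendsto htend (Eventually.of_forall fun n => hu ⟨Finset.range n, rfl⟩)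
  exact tendsto_atTop_isLUB hmono hlub

lemma tprod_eq_qF (hq0 : 0 < q) (hq1 : q < 1) {z : ℝ} (hz : 0 ≤ z) :
    (∏' j : ℕ, (1 + q ^ j * z)) = qF q z :=
  (hasProd_qF hq0 hq1 hz).tprod_eq



lemma qp_eq (q : ℝ) (k : ℕ) : (1 - q) ^ k * qFact q k = qp q k := by
  induction k with
  | zero => simp [qFact, qp]
  | succ k ih =>
      have hstep : qFact q (k + 1) = qFact q k * qInt q (k + 1) := rfl
      have hgeom : (1 - q) * qInt q (k + 1) = 1 - q ^ (k + 1) := by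
        have := geom_sum_mul q (k + 1)
        unfold qInt
        nlinarith [this]
      calc (1 - q) ^ (k + 1) * qFact q (k + 1)
          = ((1 - q) ^ k * qFact q k) * ((1 - q) * qInt q (k + 1)) := by
            rw [hstep]; ring
        _ = qp q k * (1 - q ^ (k + 1)) := by rw [ih, hgeom]
        _ = qp q (k + 1) := (qp_succ q k).symm

lemma lupasBInf_eq {q : ℝ} (hq0 : 0 < q) (hq1 : q < 1) {x : ℝ} (hx0 : 0 ≤ x) (hx1 : x < 1)
    (k : ℕ) : lupasBInf q k x = qa q (x / (1 - x)) k / qF q (x / (1 - x)) := by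
  have ht : 0 ≤ x / (1 - x) := div_nonneg hx0 (by linarith)
  rw [lupasBInf, tprod_eq_qF hq0 hq1 ht]
  unfold qa
  rw [Finset.sum_range_id, ← qp_eq, div_div]

end LupasAux

open LupasAux in
theorem lupasRInf_third_moment (q : ℝ) (hq0 : 0 < q) (hq1 : q < 1)
    (x : ℝ) (hx : x ∈ Set.Icc (0:ℝ) 1) :
    lupasRInf q (fun t => t ^ 3) x =
      x * vq q x + (1 - q) ^ 2 * (x * (1 - vq q x)) -
        q ^ 2 * (x * (1 - vq q x) * vq (q ^ 2) x) := by
  have hq1' : ¬ 1 < q := by linarith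
  rcases hx.2.eq_or_lt with h1 | hx1
  · -- x = 1
    rw [h1]
    rw [lupasRInf, if_neg hq1', lupasRInfLow, if_pos rfl]
    rw [vq, vq]
    have : (1:ℝ) - 1 + q * 1 = q := by ring
    field_simp
    ring
  · -- x < 1
    have hx0 : (0:ℝ) ≤ x := hx.1
    have h1x : (0:ℝ) < 1 - x := by linarith
    set t : ℝ := x / (1 - x) with hton
    have ht : 0 ≤ t := div_nonneg hx0 h1x.le
    rw [lupasRInf, if_neg hq1', lupasRInfLow, if_neg hx1.ne]
    have hb : ∀ k : ℕ, (fun s : ℝ => s ^ 3) (1 - q ^ k) * lupasBInf q k x =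
        (qa q t k - 3 * qa q (q * t) k + 3 * qa q (q ^ 2 * t) k - qa q (q ^ 3 * t) k)
          / qF q t := by
      intro k
      rw [lupasBInf_eq hq0 hq1 hx0 hx1 k, ← hton,
        qa_scale q q t k, qa_scale q (q ^ 2) t k, qa_scale q (q ^ 3) t k]
      ring
    rw [tsum_congr hb, tsum_div_const]
    have hs0 := summable_qa hq0 hq1 t
    have hs1 := summable_qa hq0 hq1 (q * t)
    have hs2 := summable_qa hq0 hq1 (q ^ 2 * t)
    have hs3 := summable_qa hq0 hq1 (q ^ 3 * t)
    have htsum : (∑' k, (qa q t k - 3 * qa q (q * t) k + 3 * qa q (q ^ 2 * t) k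
        - qa q (q ^ 3 * t) k))
        = qF q t - 3 * qF q (q * t) + 3 * qF q (q ^ 2 * t) - qF q (q ^ 3 * t) := by
      rw [Summable.tsum_sub (((hs0.sub (hs1.mul_left 3)).add (hs2.mul_left 3))) hs3,
        Summable.tsum_add (hs0.sub (hs1.mul_left 3)) (hs2.mul_left 3),
        Summable.tsum_sub hs0 (hs1.mul_left 3), tsum_mul_left, tsum_mul_left]
      rfl
    rw [htsum]
    have hC : qF q t = (1 + t) * qF q (q * t) := qF_funceq hq0 hq1 t
    have hB : qF q (q * t) = (1 + q * t) * qF q (q ^ 2 * t) := by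
      have h := qF_funceq hq0 hq1 (q * t)
      rw [show q * (q * t) = q ^ 2 * t by ring] at h
      exact h
    have hA : qF q (q ^ 2 * t) = (1 + q ^ 2 * t) * qF q (q ^ 3 * t) := by
      have h := qF_funceq hq0 hq1 (q ^ 2 * t)
      rw [show q * (q ^ 2 * t) = q ^ 3 * t by ring] at h
      exact h
    have hApos : 0 < qF q (q ^ 3 * t) :=
      qF_pos hq0 hq1 (by positivity)
    have hqx : 0 ≤ q * x := mul_nonneg hq0.le hx0
    have hq2x : 0 ≤ q ^ 2 * x := mul_nonneg (by positivity) hx0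
    have hd1 : (0:ℝ) < 1 - x + q * x := by linarith
    have hd2 : (0:ℝ) < 1 - x + q ^ 2 * x := by linarith
    rw [hC, hB, hA]
    have hu : (0:ℝ) < 1 + t := by linarith
    have hv : (0:ℝ) < 1 + q * t := by nlinarith
    have hw : (0:ℝ) < 1 + q ^ 2 * t := by nlinarith
    have cancel : ((1 + t) * ((1 + q * t) * ((1 + q ^ 2 * t) * qF q (q ^ 3 * t)))
          - 3 * ((1 + q * t) * ((1 + q ^ 2 * t) * qF q (q ^ 3 * t)))
          + 3 * ((1 + q ^ 2 * t) * qF q (q ^ 3 * t)) - qF q (q ^ 3 * t))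
          / ((1 + t) * ((1 + q * t) * ((1 + q ^ 2 * t) * qF q (q ^ 3 * t))))
        = ((1 + t) * (1 + q * t) * (1 + q ^ 2 * t) - 3 * ((1 + q * t) * (1 + q ^ 2 * t))
            + 3 * (1 + q ^ 2 * t) - 1) / ((1 + t) * ((1 + q * t) * (1 + q ^ 2 * t))) := by
      rw [div_eq_div_iff (by positivity) (by positivity)]
      ring
    rw [cancel, vq, vq, hton]
    have hne : (1 - x) ≠ 0 := h1x.ne'
    field_simp
    ring
end
end
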